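/- arXiv:1804.04504 — 2 statements merged into one kernel-verified Lean document; each statement's English description precedes it below -/
import Mathlib

section
/- For even n = 2k with n ≥ 6, the schedule generated by the circle design has rest difference index exactly 2. -/
/-- `f` lists the games of a single round-robin tournament on `n` teams:
positions `0, ..., N-1` are in bijection with the unordered pairs of distinct teams. -/
def isSchedule (n N : ℕ) (f : ℕ → Sym2 (Fin n)) : Prop :=
  (∀ i, i < N → ¬ (f i).IsDiag) ∧
  ∀ p : Sym2 (Fin n), ¬ p.IsDiag → ∃! i, i < N ∧ f i = p

/-- The schedule has guaranteed rest time at least `b`: any two games involving a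
common team `t` are separated by at least `b` games not involving `t`. -/
def hasRest (n N : ℕ) (f : ℕ → Sym2 (Fin n)) (b : ℕ) : Prop :=
  ∀ t : Fin n, ∀ i j, i < j → j < N → t ∈ f i → t ∈ f j →
    b ≤ ((Finset.Ioo i j).filter (fun l => t ∉ f l)).card

/-- Number of games played by team `t` in the first `m` games. -/
def played (n : ℕ) (f : ℕ → Sym2 (Fin n)) (t : Fin n) (m : ℕ) : ℕ :=
  ((Finset.range m).filter (fun i => t ∈ f i)).card

/-- The games-played difference index is at most `p`. -/
def gpLe (n N : ℕ) (f : ℕ → Sym2 (Fin n)) (p : ℕ) : Prop :=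
  ∀ m, m ≤ N → ∀ t1 t2 : Fin n, played n f t1 m ≤ played n f t2 m + p

/-- The rest of team `t` going into the game at position `i`: the number of games since
`t`'s previous game, where all teams play an imaginary game one slot before game `0`. -/
def rest (n : ℕ) (f : ℕ → Sym2 (Fin n)) (t : Fin n) (i : ℕ) : ℕ :=
  ((Finset.range i).filter (fun j => ∀ l, j ≤ l → l < i → t ∉ f l)).card

/-- The rest difference index is at most `d`. -/
def rdLe (n N : ℕ) (f : ℕ → Sym2 (Fin n)) (d : ℕ) : Prop :=
  ∀ i, i < N → ∀ t1 t2 : Fin n, t1 ∈ f i → t2 ∈ f i →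
    rest n f t1 i ≤ rest n f t2 i + d

/-- Circle design for `n = 2k` teams (0-indexed teams; team `t` is team `t+1` of the
paper): team `0` is fixed at the top-left; the other `2k-1` teams occupy cyclic
positions `0, ..., 2k-2` (top-row columns `1..k-1` left to right, then bottom-row
columns `k-1` down to `0`), each rotating one step per round.
`circleTeamE k hk r c` is the team at cyclic position `c` in round `r`. -/
def circleTeamE (k : ℕ) (hk : 0 < k) (r c : ℕ) : Fin (2*k) :=
  ⟨(c + (2*k-1) - r % (2*k-1)) % (2*k-1) + 1, by
    have h := Nat.mod_lt (c + (2*k-1) - r % (2*k-1)) (y := 2*k-1) (by omega)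
    omega⟩

/-- The `i`-th game (0-indexed) of the asynchronous circle-design schedule for `2k`
teams: round `i / k`, column `i % k`, columns read left to right. -/
def circleGameE (k : ℕ) (hk : 0 < k) (i : ℕ) : Sym2 (Fin (2*k)) :=
  if i % k = 0 then Sym2.mk ⟨0, by omega⟩ (circleTeamE k hk (i / k) (2*k-2))
  else Sym2.mk (circleTeamE k hk (i / k) (i % k - 1)) (circleTeamE k hk (i / k) (2*k-2 - i % k))

section CircleAux

def colk (k p : ℕ) : ℕ := if p = 2*k-2 then 0 else if p ≤ k-2 then p+1 else 2*k-2-p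

def gcol (k : ℕ) (t : Fin (2*k)) (r : ℕ) : ℕ :=
  if t.val = 0 then 0 else colk k ((t.val - 1 + r) % (2*k-1))

lemma colk_lt {k : ℕ} (hk : 3 ≤ k) (p : ℕ) : colk k p < k := by
  unfold colk; split_ifs <;> omega

lemma gcol_lt {k : ℕ} (hk : 3 ≤ k) (t : Fin (2*k)) (r : ℕ) : gcol k t r < k := by
  unfold gcol; split_ifs
  · omega
  · exact colk_lt hk _

lemma modinv {m : ℕ} (c v r : ℕ) (hm : 0 < m) (hc : c < m) (hv : v < m) :
    ((c + m - r % m) % m = v ↔ (v + r) % m = c) := by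
  have hr : r % m < m := Nat.mod_lt _ hm
  have h3 : (v + r) % m = (v + r % m) % m := by
    conv_lhs => rw [Nat.add_mod, Nat.mod_eq_of_lt hv]
  rw [h3]
  have h1 : (c + m - r % m) % m = if r % m ≤ c then c - r % m else c + m - r % m := by
    split_ifs with h
    · have e : c + m - r % m = (c - r % m) + m := by omega
      rw [e, Nat.add_mod_right]; exact Nat.mod_eq_of_lt (by omega)
    · exact Nat.mod_eq_of_lt (by omega)
  have h2 : (v + r % m) % m = if v + r % m < m then v + r % m else v + r % m - m := by
    split_ifs with h
    · exact Nat.mod_eq_of_lt h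
    · rw [Nat.mod_eq_sub_mod (by omega)]; exact Nat.mod_eq_of_lt (by omega)
  rw [h1, h2]; split_ifs <;> omega

lemma team_eq_iff {k : ℕ} (h0 : 0 < k) (r c v : ℕ) (hc : c < 2*k-1)
    (hv : v < 2*k-1) (t : Fin (2*k)) (htv : t.val = v + 1) :
    t = circleTeamE k h0 r c ↔ (v + r) % (2*k-1) = c := by
  rw [Fin.ext_iff]
  show t.val = (c + (2*k-1) - r % (2*k-1)) % (2*k-1) + 1 ↔ _
  rw [htv]
  constructor
  · intro h; exact (modinv c v r (by omega) hc hv).mp (by omega)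
  · intro h; have := (modinv c v r (by omega) hc hv).mpr h; omega

lemma zero_ne_team {k : ℕ} (h0 : 0 < k) (r c : ℕ) (t : Fin (2*k)) (htv : t.val = 0) :
    t ≠ circleTeamE k h0 r c := by
  intro h
  have := congrArg Fin.val h
  rw [htv] at this
  simp only [circleTeamE] at this
  omega

lemma mem_circle_iff {k : ℕ} (h0 : 0 < k) (hk : 3 ≤ k) (t : Fin (2*k)) (i : ℕ) :
    t ∈ circleGameE k h0 i ↔ i % k = gcol k t (i / k) := by
  have hm : (0:ℕ) < 2*k-1 := by omega
  have hmk : i % k < k := Nat.mod_lt _ h0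
  unfold circleGameE
  rcases Nat.eq_zero_or_pos t.val with htv | htv
  · have hg : gcol k t (i/k) = 0 := by unfold gcol; rw [if_pos htv]
    rw [hg]
    split_ifs with hc
    · simp only [Sym2.mem_iff]
      constructor
      · intro _; exact hc
      · intro _; left; exact Fin.ext htv
    · simp only [Sym2.mem_iff]
      constructor
      · rintro (h | h)
        · exact absurd h (zero_ne_team h0 _ _ t htv)
        · exact absurd h (zero_ne_team h0 _ _ t htv)
      · intro h; exact absurd h hc
  · have hv : t.val - 1 < 2*k-1 := by omega
    have htv' : t.val = (t.val - 1) + 1 := by omega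
    have hne : ¬ (t = (⟨0, by omega⟩ : Fin (2*k))) := by
      intro e; rw [e] at htv; simp at htv
    obtain ⟨p, hp, hpe⟩ : ∃ p, p < 2*k-1 ∧ (t.val - 1 + i/k) % (2*k-1) = p :=
      ⟨_, Nat.mod_lt _ hm, rfl⟩
    have hg : gcol k t (i/k) = colk k p := by
      unfold gcol; rw [if_neg (by omega), hpe]
    rw [hg]
    split_ifs with hc
    · simp only [Sym2.mem_iff]
      rw [team_eq_iff h0 (i/k) (2*k-2) (t.val-1) (by omega) hv t htv', hpe]
      simp only [hne, false_or]
      unfold colk; split_ifs <;> omega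
    · simp only [Sym2.mem_iff]
      rw [team_eq_iff h0 (i/k) (i%k - 1) (t.val-1) (by omega) hv t htv',
          team_eq_iff h0 (i/k) (2*k-2 - i%k) (t.val-1) (by omega) hv t htv', hpe]
      unfold colk; split_ifs <;> omega

lemma rest_eq_prev {n : ℕ} (f : ℕ → Sym2 (Fin n)) (t : Fin n) (p i : ℕ)
    (hpi : p < i) (hp : t ∈ f p) (hmid : ∀ l, p < l → l < i → t ∉ f l) :
    rest n f t i = i - p - 1 := by
  unfold rest
  have hset : (Finset.range i).filter (fun j => ∀ l, j ≤ l → l < i → t ∉ f l)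
      = Finset.Ioo p i := by
    ext j
    simp only [Finset.mem_filter, Finset.mem_range, Finset.mem_Ioo]
    constructor
    · rintro ⟨hj, hall⟩
      refine ⟨?_, hj⟩
      by_contra hle
      exact hall p (by omega) hpi hp
    · rintro ⟨h1, h2⟩
      exact ⟨h2, fun l hl1 hl2 => hmid l (by omega) hl2⟩
  rw [hset, Nat.card_Ioo]

lemma rest_eq_of_not {n : ℕ} (f : ℕ → Sym2 (Fin n)) (t : Fin n) (i : ℕ)
    (h : ∀ l, l < i → t ∉ f l) : rest n f t i = i := by
  unfold rest
  rw [Finset.filter_true_of_mem, Finset.card_range]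
  intro j hj l _ hl
  exact h l hl

lemma rest_round0 {k : ℕ} (h0 : 0 < k) (hk : 3 ≤ k) (t : Fin (2*k)) (i : ℕ) (hik : i < k)
    (ht : t ∈ circleGameE k h0 i) :
    rest (2*k) (circleGameE k h0) t i = i := by
  apply rest_eq_of_not
  intro l hl hmem
  rw [mem_circle_iff h0 hk] at ht hmem
  rw [Nat.div_eq_of_lt hik, Nat.mod_eq_of_lt hik] at ht
  rw [Nat.div_eq_of_lt (by omega), Nat.mod_eq_of_lt (by omega)] at hmem
  omega

lemma rest_circle {k : ℕ} (h0 : 0 < k) (hk : 3 ≤ k) (t : Fin (2*k)) (i : ℕ) (hki : k ≤ i)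
    (ht : t ∈ circleGameE k h0 i) :
    rest (2*k) (circleGameE k h0) t i + gcol k t (i/k - 1) + 1 = k + i % k := by
  have hr1 : 1 ≤ i / k := (Nat.one_le_div_iff h0).mpr hki
  have hmk : i % k < k := Nat.mod_lt _ h0
  have hti : i % k = gcol k t (i/k) := (mem_circle_iff h0 hk t i).mp ht
  have hc'k : gcol k t (i/k - 1) < k := gcol_lt hk t _
  have hic : k * (i/k) + i % k = i := Nat.div_add_mod i k
  have hkr : k * (i/k - 1) + k = k * (i/k) := by
    rw [← Nat.mul_succ]; congr 1; omega
  set c' := gcol k t (i/k - 1) with hc'def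
  set p := k * (i/k - 1) + c' with hpdef
  have hpk : p % k = c' := by
    rw [hpdef, Nat.mul_add_mod, Nat.mod_eq_of_lt hc'k]
  have hpd : p / k = i/k - 1 := by
    rw [hpdef, Nat.mul_add_div h0, Nat.div_eq_of_lt hc'k, Nat.add_zero]
  have hpi : p < i := by omega
  have hmem_p : t ∈ circleGameE k h0 p := by
    rw [mem_circle_iff h0 hk, hpk, hpd]
  have hmid : ∀ l, p < l → l < i → t ∉ circleGameE k h0 l := by
    intro l hl1 hl2 hmem
    rw [mem_circle_iff h0 hk] at hmem
    have hdam := Nat.div_add_mod l k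
    have hld : l / k = i/k - 1 ∨ l / k = i/k := by
      have hA : i/k - 1 ≤ l / k := by
        rw [Nat.le_div_iff_mul_le h0]
        calc (i/k - 1) * k = k * (i/k - 1) := Nat.mul_comm _ _
          _ ≤ p := by omega
          _ ≤ l := le_of_lt hl1
      have hB : l / k < i/k + 1 := by
        rw [Nat.div_lt_iff_lt_mul h0]
        calc l < i := hl2
          _ = k * (i/k) + i % k := hic.symm
          _ ≤ k * (i/k) + k := by omega
          _ = (i/k + 1) * k := by ring
      omega
    rcases hld with hcase | hcase
    · rw [hcase] at hdam hmem
      omega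
    · rw [hcase] at hdam hmem
      omega
  have hrest := rest_eq_prev (circleGameE k h0) t p i hpi hmem_p hmid
  omega

lemma gcol_step {k : ℕ} (hk : 3 ≤ k) (t : Fin (2*k)) (r : ℕ) (hr : 1 ≤ r) :
    gcol k t r ≤ gcol k t (r-1) + 1 ∧ gcol k t (r-1) ≤ gcol k t r + 1 := by
  unfold gcol
  split_ifs with h
  · omega
  · obtain ⟨p', hp', hpe⟩ : ∃ p', p' < 2*k-1 ∧ (t.val - 1 + (r-1)) % (2*k-1) = p' :=
      ⟨_, Nat.mod_lt _ (by omega), rfl⟩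
    have hv : t.val - 1 + (r-1) + 1 = t.val - 1 + r := by omega
    have hpe2 : (t.val - 1 + r) % (2*k-1) = (p' + 1) % (2*k-1) := by
      rw [← hv, Nat.add_mod (t.val - 1 + (r-1)) 1,
        Nat.mod_eq_of_lt (show (1:ℕ) < 2*k-1 by omega), hpe]
    rw [hpe, hpe2]
    rcases Nat.lt_or_ge (p' + 1) (2*k-1) with h2 | h2
    · rw [Nat.mod_eq_of_lt h2]
      unfold colk; split_ifs <;> omega
    · have hp'e : p' = 2*k-2 := by omega
      rw [show p' + 1 = 2*k-1 by omega, Nat.mod_self]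
      unfold colk; split_ifs <;> omega

lemma col_close {k : ℕ} (h0 : 0 < k) (hk : 3 ≤ k) (t : Fin (2*k)) (i : ℕ) (hki : k ≤ i)
    (ht : t ∈ circleGameE k h0 i) :
    i % k ≤ gcol k t (i/k - 1) + 1 ∧ gcol k t (i/k - 1) ≤ i % k + 1 := by
  rw [(mem_circle_iff h0 hk t i).mp ht]
  exact gcol_step hk t (i/k) ((Nat.one_le_div_iff h0).mpr hki)

end CircleAux

/-- For even `n = 2k ≥ 6`, the circle-design schedule has rest difference index
exactly `2`. -/
theorem stmt11 (k : ℕ) (hk : 3 ≤ k) :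
    rdLe (2*k) (2*k*(2*k-1)/2) (circleGameE k (by omega)) 2 ∧
    ¬ rdLe (2*k) (2*k*(2*k-1)/2) (circleGameE k (by omega)) 1 := by
  have h0 : 0 < k := by omega
  have main : ∀ (hp : 0 < k),
      rdLe (2*k) (2*k*(2*k-1)/2) (circleGameE k hp) 2 ∧
      ¬ rdLe (2*k) (2*k*(2*k-1)/2) (circleGameE k hp) 1 := by
    intro hp
    constructor
    · intro i _ t1 t2 h1 h2
      rcases lt_or_ge i k with hik | hik
      · rw [rest_round0 hp hk t1 i hik h1, rest_round0 hp hk t2 i hik h2]; omega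
      · have e1 := rest_circle hp hk t1 i hik h1
        have e2 := rest_circle hp hk t2 i hik h2
        have b1 := col_close hp hk t1 i hik h1
        have b2 := col_close hp hk t2 i hik h2
        have c1 := gcol_lt hk t1 (i/k - 1)
        have c2 := gcol_lt hk t2 (i/k - 1)
        omega
    · intro hcon
      have hb1 : 2*k-1 < 2*k := by omega
      have hb2 : 2*k-3 < 2*k := by omega
      have hNe : 2*k*(2*k-1) = 2*(k*(2*k-1)) := by ring
      have hN : 2*k*(2*k-1)/2 = k*(2*k-1) := by
        rw [hNe]; exact Nat.mul_div_cancel_left _ (by norm_num)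
      have h5 : k*5 ≤ k*(2*k-1) := Nat.mul_le_mul_left k (by omega)
      have hi : k + 1 < 2*k*(2*k-1)/2 := by omega
      have hmod : (k+1) % k = 1 := by
        rw [Nat.add_mod_left]; exact Nat.mod_eq_of_lt (by omega)
      have hdiv : (k+1) / k = 1 := by
        rw [Nat.add_comm, Nat.add_div_right _ hp, Nat.div_eq_of_lt (by omega)]
      have g11 : gcol k (⟨2*k-1, hb1⟩ : Fin (2*k)) 1 = 1 := by
        show (if 2*k-1 = 0 then 0 else colk k ((2*k-1-1+1) % (2*k-1))) = 1
        rw [if_neg (by omega), show 2*k-1-1+1 = 2*k-1 by omega, Nat.mod_self]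
        unfold colk; split_ifs <;> omega
      have g10 : gcol k (⟨2*k-1, hb1⟩ : Fin (2*k)) 0 = 0 := by
        show (if 2*k-1 = 0 then 0 else colk k ((2*k-1-1+0) % (2*k-1))) = 0
        rw [if_neg (by omega), show 2*k-1-1+0 = 2*k-2 by omega,
          Nat.mod_eq_of_lt (by omega)]
        unfold colk; split_ifs <;> omega
      have g21 : gcol k (⟨2*k-3, hb2⟩ : Fin (2*k)) 1 = 1 := by
        show (if 2*k-3 = 0 then 0 else colk k ((2*k-3-1+1) % (2*k-1))) = 1
        rw [if_neg (by omega), show 2*k-3-1+1 = 2*k-3 by omega,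
          Nat.mod_eq_of_lt (by omega)]
        unfold colk; split_ifs <;> omega
      have g20 : gcol k (⟨2*k-3, hb2⟩ : Fin (2*k)) 0 = 2 := by
        show (if 2*k-3 = 0 then 0 else colk k ((2*k-3-1+0) % (2*k-1))) = 2
        rw [if_neg (by omega), show 2*k-3-1+0 = 2*k-4 by omega,
          Nat.mod_eq_of_lt (by omega)]
        unfold colk; split_ifs <;> omega
      have ht1 : (⟨2*k-1, hb1⟩ : Fin (2*k)) ∈ circleGameE k hp (k+1) := by
        rw [mem_circle_iff hp hk, hmod, hdiv, g11]
      have ht2 : (⟨2*k-3, hb2⟩ : Fin (2*k)) ∈ circleGameE k hp (k+1) := by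
        rw [mem_circle_iff hp hk, hmod, hdiv, g21]
      have e1 := rest_circle hp hk ⟨2*k-1, hb1⟩ (k+1) (by omega) ht1
      have e2 := rest_circle hp hk ⟨2*k-3, hb2⟩ (k+1) (by omega) ht2
      rw [hmod, hdiv] at e1 e2
      norm_num at e1 e2
      rw [g10] at e1
      rw [g20] at e2
      have hfin := hcon (k+1) hi ⟨2*k-1, hb1⟩ ⟨2*k-3, hb2⟩ ht1 ht2
      omega
  exact ⟨(main _).1, (main _).2⟩
end

section
/- For odd n = 2k+1 with n ≥ 5, the schedule generated by the circle design has rest difference index exactly k+1. -/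
/-- Circle design for odd `n = 2k+1` teams `0, ..., 2k` (team `t` is team `t+1` of the
paper): a dummy team is fixed at the top-left; the `2k+1` real teams occupy cyclic
positions `0, ..., 2k` (top-row columns `1..k` left to right, then bottom-row columns
`k` down to `0`), each rotating one step per round; the team at cyclic position `2k`
(below the dummy) sits out the round. -/
def circleTeamO (k : ℕ) (r c : ℕ) : Fin (2*k+1) :=
  ⟨(c + (2*k+1) - r % (2*k+1)) % (2*k+1), Nat.mod_lt _ (by omega)⟩

/-- The `i`-th game (0-indexed) of the asynchronous circle-design schedule for `2k+1`
teams: round `i / k`, column `i % k + 1`, columns read left to right. -/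
def circleGameO (k : ℕ) (i : ℕ) : Sym2 (Fin (2*k+1)) :=
  Sym2.mk (circleTeamO k (i / k) (i % k)) (circleTeamO k (i / k) (2*k - 1 - i % k))

namespace CDAux

/-- cyclic position of team `t` in round `r` -/
def pos (k : ℕ) (t : Fin (2*k+1)) (r : ℕ) : ℕ := (t.val + r) % (2*k+1)

/-- column of a cyclic position -/
def colA (k p : ℕ) : ℕ := if p < k then p else 2*k-1-p

/-- index of team `t`'s game in round `r` (when it plays) -/
def gm (k : ℕ) (t : Fin (2*k+1)) (r : ℕ) : ℕ := r*k + colA k (pos k t r)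

lemma mod_cancel (n a b : ℕ) (ha : a < n) : ((a + n - b % n) % n + b) % n = a := by
  rw [Nat.mod_add_mod]
  have h1 : b % n ≤ b := Nat.mod_le _ _
  have h4 : b % n < n := Nat.mod_lt _ (by omega)
  have h2 : n * (b / n) + b % n = b := Nat.div_add_mod _ _
  have h3 : n * (1 + b / n) = n + n * (b / n) := by ring
  have : a + n - b % n + b = a + n * (1 + b / n) := by omega
  rw [this, Nat.add_mul_mod_self_left, Nat.mod_eq_of_lt ha]

lemma circleTeamO_eq (k r c : ℕ) (hc : c < 2*k+1) (t : Fin (2*k+1)) :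
    circleTeamO k r c = t ↔ (t.val + r) % (2*k+1) = c := by
  have hu : ((c + (2*k+1) - r % (2*k+1)) % (2*k+1) + r) % (2*k+1) = c := mod_cancel (2*k+1) c r hc
  constructor
  · intro h
    rw [← h]
    exact hu
  · intro h
    have h2 : (t.val + r) % (2*k+1) = ((c + (2*k+1) - r % (2*k+1)) % (2*k+1) + r) % (2*k+1) := by rw [h, hu]
    have hm : Nat.ModEq (2*k+1) (t.val + r) ((c + (2*k+1) - r % (2*k+1)) % (2*k+1) + r) := h2
    have := hm.add_right_cancel' r
    have ht : t.val % (2*k+1) = (c + (2*k+1) - r % (2*k+1)) % (2*k+1) % (2*k+1) := this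
    rw [Nat.mod_mod_of_dvd _ dvd_rfl, Nat.mod_eq_of_lt t.isLt] at ht
    exact (Fin.val_injective ht.symm)

lemma mem_iff (k : ℕ) (hk : 1 ≤ k) (t : Fin (2*k+1)) (i : ℕ) :
    t ∈ circleGameO k i ↔
      pos k t (i/k) = i % k ∨ pos k t (i/k) = 2*k-1 - i % k := by
  have h1 : i % k < 2*k+1 := by have := Nat.mod_lt i (show 0 < k by omega); omega
  have h2 : 2*k-1 - i % k < 2*k+1 := by omega
  rw [circleGameO, Sym2.mem_iff]
  rw [show (t = circleTeamO k (i/k) (i%k)) ↔ (circleTeamO k (i/k) (i%k) = t) from eq_comm]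
  rw [show (t = circleTeamO k (i/k) (2*k-1-i%k)) ↔ (circleTeamO k (i/k) (2*k-1-i%k) = t) from eq_comm]
  rw [circleTeamO_eq k _ _ h1 t, circleTeamO_eq k _ _ h2 t]
  rfl

lemma pos_lt (k : ℕ) (t : Fin (2*k+1)) (r : ℕ) : pos k t r < 2*k+1 :=
  Nat.mod_lt _ (by omega)

lemma colA_lt (k p : ℕ) (hk : 1 ≤ k) (hp : p ≤ 2*k-1) : colA k p < k := by
  unfold colA; split <;> omega

lemma idx_div (k r c : ℕ) (hk : 0 < k) (hc : c < k) : (r*k+c)/k = r := by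
  rw [Nat.add_comm, Nat.add_mul_div_right _ _ hk, Nat.div_eq_of_lt hc]; omega

lemma idx_mod (k r c : ℕ) (hc : c < k) : (r*k+c)%k = c := by
  rw [Nat.add_comm, Nat.add_mul_mod_self_right, Nat.mod_eq_of_lt hc]

lemma gm_div (k : ℕ) (hk : 1 ≤ k) (t : Fin (2*k+1)) (r : ℕ) (h : pos k t r ≠ 2*k) :
    gm k t r / k = r :=
  idx_div k r _ (by omega) (colA_lt k _ hk (by have := pos_lt k t r; omega))

lemma gm_mod (k : ℕ) (hk : 1 ≤ k) (t : Fin (2*k+1)) (r : ℕ) (h : pos k t r ≠ 2*k) :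
    gm k t r % k = colA k (pos k t r) :=
  idx_mod k r _ (colA_lt k _ hk (by have := pos_lt k t r; omega))

/-- `t` plays at game `i` iff its position in round `i/k` is not `2k` and `i` is its game. -/
lemma mem_iff_gm (k : ℕ) (hk : 1 ≤ k) (t : Fin (2*k+1)) (i : ℕ) :
    t ∈ circleGameO k i ↔ (pos k t (i/k) ≠ 2*k ∧ i = gm k t (i/k)) := by
  have hik : i % k < k := Nat.mod_lt i (show 0 < k by omega)
  have hdm : k * (i / k) + i % k = i := Nat.div_add_mod i k
  have hcomm : k * (i/k) = i/k * k := Nat.mul_comm _ _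
  rw [mem_iff k hk]
  constructor
  · rintro (h | h)
    · refine ⟨by omega, ?_⟩
      rw [gm, h, colA, if_pos (by omega)]
      omega
    · refine ⟨by omega, ?_⟩
      rw [gm, h, colA, if_neg (by omega)]
      omega
  · rintro ⟨h1, h2⟩
    have hp := pos_lt k t (i/k)
    have hclt : colA k (pos k t (i/k)) < k := colA_lt k _ hk (by omega)
    have hmc : i % k = colA k (pos k t (i/k)) := by
      rw [gm] at h2; omega
    rcases lt_or_ge (pos k t (i/k)) k with hc | hc
    · left
      rw [hmc, colA, if_pos hc]
    · right
      rw [hmc, colA, if_neg (by omega)]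
      omega

lemma pos_succ (k : ℕ) (t : Fin (2*k+1)) (r : ℕ) :
    pos k t (r+1) = if pos k t r = 2*k then 0 else pos k t r + 1 := by
  have hp := pos_lt k t r
  unfold pos at *
  rw [← Nat.add_assoc, ← Nat.mod_add_mod]
  split
  · next h => rw [h]; simp [Nat.mod_self]
  · next h => exact Nat.mod_eq_of_lt (by omega)


lemma rest_of_prev {n : ℕ} (f : ℕ → Sym2 (Fin n)) (t : Fin n) (a i : ℕ)
    (ha : t ∈ f a) (hlt : a < i) (hno : ∀ l, a < l → l < i → t ∉ f l) :
    rest n f t i = i - a - 1 := by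
  unfold rest
  have : (Finset.range i).filter (fun j => ∀ l, j ≤ l → l < i → t ∉ f l)
      = Finset.Ico (a+1) i := by
    ext j
    simp only [Finset.mem_filter, Finset.mem_range, Finset.mem_Ico]
    constructor
    · rintro ⟨hj, hP⟩
      refine ⟨?_, hj⟩
      by_contra hja
      exact hP a (by omega) hlt ha
    · rintro ⟨hja, hj⟩
      exact ⟨hj, fun l hl1 hl2 => hno l (by omega) hl2⟩
  rw [this, Nat.card_Ico]
  omega

lemma rest_of_none {n : ℕ} (f : ℕ → Sym2 (Fin n)) (t : Fin n) (i : ℕ)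
    (hno : ∀ l, l < i → t ∉ f l) : rest n f t i = i := by
  unfold rest
  have : (Finset.range i).filter (fun j => ∀ l, j ≤ l → l < i → t ∉ f l)
      = Finset.range i := by
    apply Finset.filter_true_of_mem
    intro j _ l _ hl
    exact hno l hl
  rw [this, Finset.card_range]

/-- expected rest of a team at position `p` entering its round-`r` game -/
def erest (k p r : ℕ) : ℕ :=
  if r = 0 then colA k p
  else if p = 0 then (if r = 1 then k else 2*k-1)
  else if p < k then k
  else if p = k then k-1 else k-2

lemma rest_eq_erest (k : ℕ) (hk : 2 ≤ k) (t : Fin (2*k+1)) (r : ℕ)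
    (hp : pos k t r ≠ 2*k) :
    rest (2*k+1) (circleGameO k) t (gm k t r) = erest k (pos k t r) r := by
  have hplt := pos_lt k t r
  have hclt : colA k (pos k t r) < k := colA_lt k _ (by omega) (by omega)
  -- membership of t in its own game
  have hmem : ∀ r', pos k t r' ≠ 2*k → t ∈ circleGameO k (gm k t r') := by
    intro r' h'
    rw [mem_iff_gm k (by omega)]
    rw [gm_div k (by omega) t r' h']
    exact ⟨h', rfl⟩
  -- if t ∈ game l then l is the game of round l/k
  have hunique : ∀ l, t ∈ circleGameO k l → pos k t (l/k) ≠ 2*k ∧ l = gm k t (l/k) := by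
    intro l hl
    rwa [mem_iff_gm k (by omega)] at hl
  rcases Nat.eq_zero_or_pos r with hr0 | hrpos
  · -- round 0 : first game
    subst hr0
    rw [rest_of_none]
    · rw [erest, if_pos rfl, gm]; omega
    · intro l hl hml
      have hlk : l < k := by rw [gm] at hl; omega
      have := (hunique l hml).2
      rw [Nat.div_eq_of_lt hlk] at this
      rw [gm, Nat.zero_mul, Nat.zero_add] at this
      rw [gm, Nat.zero_mul, Nat.zero_add] at hl
      omega
  · rcases Nat.eq_zero_or_pos (pos k t r) with hpz | hppos
    · -- position 0 : previous round sat out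
      have hprev : pos k t (r-1) = 2*k := by
        have := pos_succ k t (r-1)
        rw [Nat.sub_add_cancel hrpos] at this
        by_contra hne
        rw [if_neg hne] at this
        omega
      have hgm : gm k t r = r * k := by
        rw [gm, hpz, colA, if_pos (by omega)]; omega
      rcases Nat.lt_or_ge r 2 with hr1 | hr2
      · -- r = 1 : no previous game at all
        have hr1' : r = 1 := by omega
        subst hr1'
        rw [rest_of_none]
        · rw [erest, if_neg one_ne_zero, if_pos hpz, if_pos rfl, hgm]; omega
        · intro l hl hml
          obtain ⟨hlp, hle⟩ := hunique l hml
          have hprev0 : pos k t 0 = 2*k := by simpa using hprev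
          have hlr : l / k < 2 := Nat.div_lt_of_lt_mul (by rw [hgm, one_mul] at hl; omega)
          rcases (by generalize l / k = q at hlr ⊢; omega : l / k = 0 ∨ l / k = 1) with h | h
          · rw [h, hprev0] at hlp
            exact hlp rfl
          · rw [h] at hle
            rw [← hle] at hl
            omega
      · -- r ≥ 2 : previous game in round r-2 at position 2k-1
        have hsub : (r-2)*k = r*k - 2*k := Nat.sub_mul r 2 k
        have h2kle : 2*k ≤ r*k := Nat.mul_le_mul_right k hr2
        have hprev2 : pos k t (r-2) = 2*k-1 := by
          have := pos_succ k t (r-2)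
          rw [show r-2+1 = r-1 by omega] at this
          rw [hprev] at this
          split at this
          · omega
          · omega
        have hgm2 : gm k t (r-2) = (r-2) * k := by
          rw [gm, hprev2, colA, if_neg (by omega)]
          omega
        rw [rest_of_prev _ t ((r-2)*k)]
        · rw [erest, if_neg (by omega), if_pos hpz, if_neg (by omega), hgm]
          omega
        · rw [← hgm2]; exact hmem _ (by omega)
        · rw [hgm]; omega
        · intro l hl1 hl2 hml
          obtain ⟨hlp, hle⟩ := hunique l hml
          have hl2' : l < r * k := by rw [hgm] at hl2; omega
          have hub : l / k < r := Nat.div_lt_of_lt_mul (by rw [Nat.mul_comm]; omega)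
          have hlb : r - 2 ≤ l / k := (Nat.le_div_iff_mul_le (by omega)).2 (by omega)
          rcases (by generalize l / k = q at hub hlb ⊢; omega : l / k = r - 2 ∨ l / k = r - 1) with h | h
          · rw [h, hgm2] at hle
            omega
          · rw [h, hprev] at hlp
            exact hlp rfl
    · -- position ≥ 1 : previous game in round r-1 at position p-1
      have hstep := pos_succ k t (r-1)
      rw [Nat.sub_add_cancel hrpos] at hstep
      have hprev : pos k t (r-1) = pos k t r - 1 := by
        by_cases h2k : pos k t (r-1) = 2*k
        · rw [if_pos h2k] at hstep; omega
        · rw [if_neg h2k] at hstep; omega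
      have hprevne : pos k t (r-1) ≠ 2*k := by omega
      have hclt' : colA k (pos k t (r-1)) < k :=
        colA_lt k _ (by omega) (by have := pos_lt k t (r-1); omega)
      have hmul : r * k = (r-1) * k + k := by
        have h1 : (r-1)*k = r*k - 1*k := Nat.sub_mul r 1 k
        have h2 : 1*k ≤ r*k := Nat.mul_le_mul_right k hrpos
        omega
      have hlt : gm k t (r-1) < gm k t r := by
        rw [gm, gm, hmul]; omega
      rw [rest_of_prev _ t (gm k t (r-1)) _ (hmem _ hprevne) hlt]
      · -- value computation
        rw [gm, gm, hmul, hprev]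
        rw [erest, if_neg (by omega), if_neg (by omega)]
        unfold colA
        split_ifs <;> omega
      · intro l hl1 hl2 hml
        obtain ⟨hlp, hle⟩ := hunique l hml
        have hmul2 : k * (r + 1) = r * k + k := by ring
        have hub : l / k < r + 1 := Nat.div_lt_of_lt_mul
          (by rw [hmul2]; rw [gm] at hl2; omega)
        have hlb : r - 1 ≤ l / k := (Nat.le_div_iff_mul_le (by omega)).2
          (by rw [gm] at hl1; omega)
        rcases (by generalize l / k = q at hub hlb ⊢; omega : l / k = r - 1 ∨ l / k = r) with h | h
        · rw [h] at hle; omega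
        · rw [h] at hle; omega

lemma erest_bound (k c r : ℕ) (hk : 2 ≤ k) (hc : c < k) (p1 p2 : ℕ)
    (h1 : p1 = c ∨ p1 = 2*k-1-c) (h2 : p2 = c ∨ p2 = 2*k-1-c) :
    erest k p1 r ≤ erest k p2 r + (k+1) := by
  unfold erest colA
  rcases h1 with h|h <;> rcases h2 with h'|h' <;> subst h <;>
    (try subst h') <;> split_ifs <;> omega

lemma Ncalc (k : ℕ) : (2*k+1)*(2*k)/2 = (2*k+1)*k := by
  rw [show (2*k+1)*(2*k) = ((2*k+1)*k)*2 by ring, Nat.mul_div_cancel _ (by omega)]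

end CDAux

open CDAux in
theorem stmt14' (k : ℕ) (hk : 2 ≤ k) :
    (∀ i, i < (2*k+1)*(2*k)/2 → ∀ t1 t2 : Fin (2*k+1), t1 ∈ circleGameO k i → t2 ∈ circleGameO k i →
      rest (2*k+1) (circleGameO k) t1 i ≤ rest (2*k+1) (circleGameO k) t2 i + (k+1)) ∧
    ¬ (∀ i, i < (2*k+1)*(2*k)/2 → ∀ t1 t2 : Fin (2*k+1), t1 ∈ circleGameO k i → t2 ∈ circleGameO k i →
      rest (2*k+1) (circleGameO k) t1 i ≤ rest (2*k+1) (circleGameO k) t2 i + k) := by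
  have hk1 : (1:ℕ) ≤ k := by omega
  constructor
  · intro i hi t1 t2 ht1 ht2
    have hm1 := (mem_iff k hk1 t1 i).1 ht1
    have hm2 := (mem_iff k hk1 t2 i).1 ht2
    have hg1 := (mem_iff_gm k hk1 t1 i).1 ht1
    have hg2 := (mem_iff_gm k hk1 t2 i).1 ht2
    have e1 := rest_eq_erest k hk t1 (i/k) hg1.1
    have e2 := rest_eq_erest k hk t2 (i/k) hg2.1
    rw [← hg1.2] at e1
    rw [← hg2.2] at e2
    rw [e1, e2]
    exact erest_bound k (i % k) (i/k) hk (Nat.mod_lt i (by omega)) _ _ hm1 hm2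
  · intro hcon
    set t1 : Fin (2*k+1) := ⟨2*k-1, by omega⟩ with ht1def
    set t2 : Fin (2*k+1) := ⟨2*k-3, by omega⟩ with ht2def
    have hdiv : (2*k) / k = 2 := Nat.mul_div_cancel 2 (by omega)
    have hmod : (2*k) % k = 0 := by
      rw [Nat.mul_comm]; exact Nat.mul_mod_right k 2
    have hpos1 : pos k t1 2 = 0 := by
      show (2*k-1 + 2) % (2*k+1) = 0
      rw [show 2*k-1+2 = 2*k+1 by omega, Nat.mod_self]
    have hpos2 : pos k t2 2 = 2*k-1 := by
      show (2*k-3 + 2) % (2*k+1) = 2*k-1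
      rw [show 2*k-3+2 = 2*k-1 by omega, Nat.mod_eq_of_lt (by omega)]
    have hmem1 : t1 ∈ circleGameO k (2*k) := by
      rw [mem_iff k hk1]
      left
      rw [hdiv, hmod, hpos1]
    have hmem2 : t2 ∈ circleGameO k (2*k) := by
      rw [mem_iff k hk1]
      right
      rw [hdiv, hmod, hpos2]
      omega
    have hg1 : gm k t1 2 = 2*k := by
      rw [gm, hpos1, colA, if_pos (by omega)]; omega
    have hg2 : gm k t2 2 = 2*k := by
      rw [gm, hpos2, colA, if_neg (by omega)]; omega
    have e1 := rest_eq_erest k hk t1 2 (by rw [hpos1]; omega)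
    have e2 := rest_eq_erest k hk t2 2 (by rw [hpos2]; omega)
    rw [hg1, hpos1] at e1
    rw [hg2, hpos2] at e2
    have he1 : erest k 0 2 = 2*k-1 := by
      unfold erest; norm_num
    have he2 : erest k (2*k-1) 2 = k-2 := by
      unfold erest
      rw [if_neg (by omega), if_neg (by omega), if_neg (by omega), if_neg (by omega)]
    have hN : 2*k < (2*k+1)*(2*k)/2 := by
      rw [Ncalc]
      have h1 : (2*k+1)*k = 2*k*k + k := by ring
      have h2 : 2*k ≤ k*k := Nat.mul_le_mul_right k hk
      have h3 : k*k ≤ 2*k*k := by rw [show 2*k*k = k*k*2 by ring]; omega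
      omega
    have := hcon (2*k) hN t1 t2 hmem1 hmem2
    rw [e1, e2, he1, he2] at this
    omega


/-- For odd `n = 2k+1 ≥ 5`, the circle-design schedule has rest difference index
exactly `k+1`. -/
theorem stmt14 (k : ℕ) (hk : 2 ≤ k) :
    rdLe (2*k+1) ((2*k+1)*(2*k)/2) (circleGameO k) (k+1) ∧
    ¬ rdLe (2*k+1) ((2*k+1)*(2*k)/2) (circleGameO k) k := by
  unfold rdLe
  exact stmt14' k hk
end
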